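/- Let R be a commutative Noetherian ring and let J ⊆ I be ideals of R such that J is generated by a regular sequence z_1, ..., z_g. Then every associated prime of R/JI is an associated prime of R/J or an associated prime of R/I, i.e. Ass(R/JI) ⊆ Ass(R/J) ∪ Ass(R/I). -/

import Mathlib

open RingTheory.Sequence

section Aux
variable {R : Type*} [CommRing R]

lemma mk_smul_eq {K : Ideal R} (s a : R) :
    s • (Ideal.Quotient.mk K a) = Ideal.Quotient.mk K (s * a) := by
  rw [← Ideal.Quotient.mk_eq_mk, ← Ideal.Quotient.mk_eq_mk,
    ← Submodule.Quotient.mk_smul, smul_eq_mul]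

/-- Membership in the ideal of a list, as a finite combination. -/
lemma mem_ofList_iff_comb (l : List R) (x : R) :
    x ∈ Ideal.ofList l ↔
      ∃ d : ℕ → R, x = ∑ i ∈ Finset.range l.length, d i * l.getD i 0 := by
  have hset : { r | r ∈ l } = Set.range (fun i : Fin l.length => l.get i) := by
    ext r
    simp [List.mem_iff_get, eq_comm]
  rw [Ideal.ofList, hset]
  constructor
  · intro hx
    obtain ⟨c, hc⟩ := (Submodule.mem_span_range_iff_exists_fun R).mp hx
    refine ⟨fun i => if h : i < l.length then c ⟨i, h⟩ else 0, ?_⟩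
    rw [← hc, ← Fin.sum_univ_eq_sum_range]
    refine Finset.sum_congr rfl fun i _ => ?_
    simp [i.isLt, List.getD_eq_getElem, smul_eq_mul]
  · rintro ⟨d, rfl⟩
    refine Ideal.sum_mem _ fun i hi => ?_
    rw [Finset.mem_range] at hi
    refine Ideal.mul_mem_left _ _ (Submodule.subset_span ?_)
    rw [List.getD_eq_getElem _ _ hi]
    exact ⟨⟨i, hi⟩, rfl⟩

/-- Membership in `J * I` where `J = Ideal.ofList l`, as a combination with
coefficients in `I`. -/
lemma mem_ofList_mul_iff_comb (l : List R) (I : Ideal R) (x : R)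
    (hx : x ∈ Ideal.ofList l * I) :
    ∃ d : ℕ → R, (∀ i, d i ∈ I) ∧
      x = ∑ i ∈ Finset.range l.length, d i * l.getD i 0 := by
  refine Submodule.mul_induction_on hx ?_ ?_
  · intro a ha b hb
    obtain ⟨e, rfl⟩ := (mem_ofList_iff_comb l a).mp ha
    refine ⟨fun i => e i * b, fun i => Ideal.mul_mem_left _ _ hb, ?_⟩
    rw [Finset.sum_mul]
    exact Finset.sum_congr rfl fun i _ => by ring
  · rintro a b ⟨d₁, hd₁, rfl⟩ ⟨d₂, hd₂, rfl⟩
    exact ⟨fun i => d₁ i + d₂ i, fun i => I.add_mem (hd₁ i) (hd₂ i), by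
      rw [← Finset.sum_add_distrib]; exact Finset.sum_congr rfl fun i _ => by ring⟩

/-- The non-zerodivisor condition extracted from a weakly regular sequence. -/
lemma regseq_nzd (zs : List R) (hreg : IsWeaklyRegular R zs) :
    ∀ i (h : i < zs.length), ∀ r : R,
      r * zs[i] ∈ Ideal.ofList (zs.take i) → r ∈ Ideal.ofList (zs.take i) := by
  intro i h r hr
  have hsm := hreg.regular_mod_prev i h
  have htop : (Ideal.ofList (zs.take i) • ⊤ : Submodule R R) = Ideal.ofList (zs.take i) := by
    rw [Ideal.smul_eq_mul, Ideal.mul_top]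
  rw [htop] at hsm
  have h0 : zs[i] • Submodule.Quotient.mk (p := Ideal.ofList (zs.take i)) r
      = zs[i] • (0 : R ⧸ Ideal.ofList (zs.take i)) := by
    rw [smul_zero, ← Submodule.Quotient.mk_smul, smul_eq_mul,
      Submodule.Quotient.mk_eq_zero, mul_comm]
    exact hr
  have := hsm h0
  rwa [Submodule.Quotient.mk_eq_zero] at this

/-- Syzygies of a regular sequence lie in the ideal generated by the sequence. -/
lemma regseq_syzygy (zs : List R) (hreg : IsWeaklyRegular R zs) :
    ∀ (k : ℕ), k ≤ zs.length → ∀ c : ℕ → R,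
      (∑ i ∈ Finset.range k, c i * zs.getD i 0 = 0) →
        ∀ i < k, c i ∈ Ideal.ofList zs := by
  have H := regseq_nzd zs hreg
  have htake_le : ∀ m, Ideal.ofList (zs.take m) ≤ Ideal.ofList zs := fun m =>
    Ideal.span_mono fun r hr => List.mem_of_mem_take hr
  intro k
  induction k with
  | zero => intro _ c _ i hi; omega
  | succ k ih =>
    intro hk c hc i hi
    have hkl : k < zs.length := hk
    have hgk : zs.getD k 0 = zs[k] := List.getD_eq_getElem _ _ hkl
    have hmemtake : ∀ j < k, zs.getD j 0 ∈ Ideal.ofList (zs.take k) := by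
      intro j hj
      refine Submodule.subset_span ?_
      have hjl : j < zs.length := lt_trans hj hkl
      have h1 : (zs.take k)[j]'(by simp [hjl, hj]) = zs[j] := List.getElem_take
      rw [List.getD_eq_getElem _ _ hjl, ← h1]
      exact List.getElem_mem _
    rw [Finset.sum_range_succ] at hc
    have hck : c k ∈ Ideal.ofList (zs.take k) := by
      refine H k hkl (c k) ?_
      have : c k * zs[k] = -∑ j ∈ Finset.range k, c j * zs.getD j 0 := by
        rw [← hgk]; linear_combination hc
      rw [this]
      exact Submodule.neg_mem _ <| Ideal.sum_mem _ fun j hj =>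
        Ideal.mul_mem_left _ _ (hmemtake j (Finset.mem_range.mp hj))
    rcases Nat.lt_or_ge i k with hik | hik
    · -- use the representation of c k and the inductive hypothesis
      obtain ⟨d, hd⟩ := (mem_ofList_iff_comb _ _).mp hck
      have hlen : (zs.take k).length = k := by rw [List.length_take]; omega
      have hdk : c k = ∑ j ∈ Finset.range k, d j * zs.getD j 0 := by
        rw [hd, hlen]
        refine Finset.sum_congr rfl fun j hj => ?_
        rw [Finset.mem_range] at hj
        congr 1
        have hjl : j < zs.length := lt_trans hj hkl
        rw [List.getD_eq_getElem _ _ hjl,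
          List.getD_eq_getElem _ _ (by simp [hjl, hj] : j < (zs.take k).length)]
        exact List.getElem_take
      have hsum0 : ∑ j ∈ Finset.range k, (c j + d j * zs.getD k 0) * zs.getD j 0 = 0 := by
        have h2 : ∑ j ∈ Finset.range k, (c j + d j * zs.getD k 0) * zs.getD j 0
            = (∑ j ∈ Finset.range k, c j * zs.getD j 0)
              + (∑ j ∈ Finset.range k, d j * zs.getD j 0) * zs.getD k 0 := by
          rw [Finset.sum_mul, ← Finset.sum_add_distrib]
          exact Finset.sum_congr rfl fun j _ => by ring
        rw [h2, ← hdk]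
        linear_combination hc
      have hmem' := ih (Nat.le_of_succ_le hk) _ hsum0 i hik
      have hz : zs.getD k 0 ∈ Ideal.ofList zs := by
        rw [hgk]; exact Submodule.subset_span (List.getElem_mem _)
      have h3 : c i + d i * zs.getD k 0 - d i * zs.getD k 0 ∈ Ideal.ofList zs :=
        Submodule.sub_mem _ hmem' (Ideal.mul_mem_left _ _ hz)
      simpa using h3
    · have hik' : i = k := by omega
      rw [hik']
      exact htake_le k hck

/-- Coefficients of an element of `J * I` with respect to a regular sequence
generating `J` all lie in `I`, provided `J ≤ I`. -/
lemma regseq_coeff_mem (zs : List R) (hreg : IsWeaklyRegular R zs)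
    {I : Ideal R} (hJI : Ideal.ofList zs ≤ I) (c : ℕ → R)
    (hx : ∑ i ∈ Finset.range zs.length, c i * zs.getD i 0 ∈ Ideal.ofList zs * I) :
    ∀ i < zs.length, c i ∈ I := by
  obtain ⟨d, hdI, hd⟩ := mem_ofList_mul_iff_comb zs I _ hx
  have h0 : ∑ i ∈ Finset.range zs.length, (c i - d i) * zs.getD i 0 = 0 := by
    have h1 : ∑ i ∈ Finset.range zs.length, (c i - d i) * zs.getD i 0
        = (∑ i ∈ Finset.range zs.length, c i * zs.getD i 0)
          - ∑ i ∈ Finset.range zs.length, d i * zs.getD i 0 := by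
      rw [← Finset.sum_sub_distrib]
      exact Finset.sum_congr rfl fun i _ => by ring
    rw [h1, ← hd, sub_self]
  intro i hi
  have hmem := regseq_syzygy zs hreg zs.length le_rfl _ h0 i hi
  have hci : c i - d i ∈ I := hJI hmem
  simpa using I.add_mem hci (hdI i)

end Aux

/-- Let `R` be Noetherian and `J ⊆ I` ideals with `J` generated by a
regular sequence `z₁, …, z_g`.  Then `Ass(R/JI) ⊆ Ass(R/J) ∪ Ass(R/I)`. -/
theorem links_of_primes_stmt7 {R : Type*} [CommRing R] [IsNoetherianRing R]
    (I J : Ideal R) (hJI : J ≤ I)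
    (g : ℕ) (zs : List R) (hlen : zs.length = g)
    (hreg : IsRegular R zs) (hJ : J = Ideal.ofList zs) :
    associatedPrimes R (R ⧸ (J * I)) ⊆
      associatedPrimes R (R ⧸ J) ∪ associatedPrimes R (R ⧸ I) := by
  intro p hp
  obtain ⟨hprime, x, hx⟩ := isAssociatedPrime_iff.mp hp
  obtain ⟨a, rfl⟩ := Ideal.Quotient.mk_surjective x
  -- membership characterization of p
  have hmem : ∀ s : R, s ∈ p ↔ s * a ∈ J * I := by
    intro s
    rw [hx, Submodule.mem_colon_singleton, Submodule.mem_bot, mk_smul_eq,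
      Ideal.Quotient.eq_zero_iff_mem]
  by_cases hcase : ∀ r : R, r * a ∈ J → r * a ∈ J * I
  · -- p is an associated prime of R/J
    left
    refine isAssociatedPrime_iff.mpr ⟨hprime, Ideal.Quotient.mk J a, ?_⟩
    ext s
    rw [Submodule.mem_colon_singleton, Submodule.mem_bot, mk_smul_eq,
      Ideal.Quotient.eq_zero_iff_mem, hmem]
    exact ⟨fun h => (Ideal.mul_le_left : J * I ≤ J) h, fun h => hcase s h⟩
  · -- p is an associated prime of R/I
    right
    push_neg at hcase
    obtain ⟨r₀, hr₀J, hr₀JI⟩ := hcase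
    set b := r₀ * a with hb
    have hbJ : b ∈ Ideal.ofList zs := hJ ▸ hr₀J
    obtain ⟨c, hc⟩ := (mem_ofList_iff_comb zs b).mp hbJ
    -- p is contained in the annihilator of each coefficient class
    have hple : ∀ i < zs.length, ∀ s ∈ p, s * c i ∈ I := by
      intro i hi s hs
      have hsb : s * b ∈ J * I := by
        have h1 : s * b = (s * r₀) * a := by rw [hb]; ring
        rw [h1, ← hmem]
        exact Ideal.mul_mem_right r₀ p hs
      have hsum : ∑ j ∈ Finset.range zs.length, (s * c j) * zs.getD j 0 ∈
          Ideal.ofList zs * I := by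
        have h2 : ∑ j ∈ Finset.range zs.length, (s * c j) * zs.getD j 0 = s * b := by
          rw [hc, Finset.mul_sum]
          exact Finset.sum_congr rfl fun j _ => by ring
        rw [h2]
        exact hJ ▸ hsb
      exact regseq_coeff_mem zs hreg.toIsWeaklyRegular (hJ ▸ hJI) _ hsum i hi
    -- the inf of the annihilators is contained in p
    have hinf : (Finset.range zs.length).inf
        (fun i => (Submodule.span R {Ideal.Quotient.mk I (c i)}).annihilator) ≤ p := by
      intro s hs
      have hcoord : ∀ i < zs.length, s * c i ∈ I := by
        intro i hi
        have h3 := Finset.inf_le (f := fun i =>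
          (Submodule.span R {Ideal.Quotient.mk I (c i)}).annihilator)
          (Finset.mem_range.mpr hi) hs
        rwa [Submodule.mem_annihilator_span_singleton, mk_smul_eq,
          Ideal.Quotient.eq_zero_iff_mem] at h3
      have hsb : s * b ∈ J * I := by
        have h4 : s * b = ∑ j ∈ Finset.range zs.length, (s * c j) * zs.getD j 0 := by
          rw [hc, Finset.mul_sum]
          exact Finset.sum_congr rfl fun j _ => by ring
        rw [h4, hJ]
        refine Ideal.sum_mem _ fun j hj => ?_
        rw [Finset.mem_range] at hj
        have hzj : zs.getD j 0 ∈ Ideal.ofList zs := by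
          rw [List.getD_eq_getElem _ _ hj]
          exact Submodule.subset_span (List.getElem_mem _)
        have h5 : zs.getD j 0 * (s * c j) ∈ Ideal.ofList zs * I :=
          Ideal.mul_mem_mul hzj (hcoord j hj)
        rwa [mul_comm (zs.getD j 0)] at h5
      have hsr : s * r₀ ∈ p := by
        rw [hmem]
        have h6 : s * r₀ * a = s * b := by rw [hb]; ring
        rw [h6]; exact hsb
      rcases hprime.mem_or_mem hsr with h | h
      · exact h
      · exact absurd ((hmem r₀).mp h) hr₀JI
    obtain ⟨i, hi, hle⟩ := hprime.inf_le'.mp hinf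
    rw [Finset.mem_range] at hi
    refine isAssociatedPrime_iff.mpr ⟨hprime, Ideal.Quotient.mk I (c i), le_antisymm ?_
      (fun s hs => hle ((Submodule.mem_annihilator_span_singleton _ _).mpr
        ((Submodule.mem_bot R).mp (Submodule.mem_colon_singleton.mp hs))))⟩
    intro s hs
    rw [Submodule.mem_colon_singleton, Submodule.mem_bot, mk_smul_eq,
      Ideal.Quotient.eq_zero_iff_mem]
    exact hple i hi s hs
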